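/- Let p be an exchangeable probability distribution on RB(n), let T₁ and T₂ be independent random trees each distributed according to p, and let 1 ≤ s ≤ n. Then P[MAST(T₁,T₂) ≥ s] ≤ C(n,s) · ∑_{t ∈ RB(s)} p_s(t)², where C(n,s) is the binomial coefficient and p_s is the marginal distribution of p on RB(s). -/

import Mathlib

/-- Rooted binary leaf-labeled trees with labels of type `α`. -/
inductive RTree (α : Type) : Type where
  | leaf : α → RTree α
  | node : RTree α → RTree α → RTree α
  deriving DecidableEq

namespace RTree

variable {α β : Type}

/-- The multiset of leaf labels of a tree. -/
def leafM : RTree α → Multiset α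
  | leaf a => {a}
  | node l r => leafM l + leafM r

/-- `T` is a rooted binary leaf-labeled tree on label set `Fin n`:
every label of `Fin n` occurs exactly once among the leaves. -/
def IsRB {n : ℕ} (T : RTree (Fin n)) : Prop :=
  leafM T = (Finset.univ : Finset (Fin n)).val

/-- Relabel the leaves of a tree along a function. -/
def relabel (f : α → β) : RTree α → RTree β
  | leaf a => leaf (f a)
  | node l r => node (relabel f l) (relabel f r)

/-- Restriction of a tree to the set `A` of labels (`none` means the empty tree). -/
def restrict [DecidableEq α] (A : Finset α) : RTree α → Option (RTree α)
  | leaf a => if a ∈ A then some (leaf a) else none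
  | node l r =>
    match restrict A l, restrict A r with
    | some l', some r' => some (node l' r')
    | some l', none => some l'
    | none, some r' => some r'
    | none, none => none

/-- The size of a maximum agreement subtree of `T₁` and `T₂`: the largest cardinality
of a set `A` of labels with `T₁|_A = T₂|_A` (the empty set always agrees). -/
def mast {n : ℕ} (T₁ T₂ : RTree (Fin n)) : ℕ :=
  ((Finset.univ : Finset (Fin n)).powerset.filter
    (fun A => restrict A T₁ = restrict A T₂)).sup Finset.card

variable {γ : Type}

theorem relabel_relabel (f : β → γ) (g : α → β) (T : RTree α) :
    relabel f (relabel g T) = relabel (f ∘ g) T := by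
  induction T with
  | leaf a => rfl
  | node l r ihl ihr => simp [relabel, ihl, ihr]

theorem leafM_relabel (f : α → β) (T : RTree α) :
    leafM (relabel f T) = (leafM T).map f := by
  induction T with
  | leaf a => rfl
  | node l r ihl ihr => simp [relabel, leafM, ihl, ihr]

theorem relabel_eq_self {f : α → α} {T : RTree α} (h : ∀ a ∈ leafM T, f a = a) :
    relabel f T = T := by
  induction T with
  | leaf a => simp [relabel, h a (by simp [leafM])]
  | node l r ihl ihr =>
    simp only [relabel]
    rw [ihl fun a ha => h a (by simp [leafM, ha]), ihr fun a ha => h a (by simp [leafM, ha])]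

theorem relabel_injective {f : α → β} (hf : Function.Injective f) :
    Function.Injective (relabel f) := by
  intro t₁ t₂ h
  induction t₁ generalizing t₂ with
  | leaf a =>
    cases t₂ with
    | leaf b => simp only [relabel, leaf.injEq] at h ⊢; exact hf h
    | node _ _ => simp [relabel] at h
  | node l r ihl ihr =>
    cases t₂ with
    | leaf b => simp [relabel] at h
    | node l' r' =>
      simp only [relabel, node.injEq] at h ⊢
      exact ⟨ihl h.1, ihr h.2⟩

theorem leafM_restrict [DecidableEq α] (A : Finset α) (T : RTree α) :
    ((restrict A T).elim 0 leafM) = (leafM T).filter (· ∈ A) := by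
  induction T with
  | leaf a => by_cases h : a ∈ A <;> simp [restrict, leafM, h, Multiset.filter_singleton]
  | node l r ihl ihr =>
    rw [leafM, Multiset.filter_add, ← ihl, ← ihr]
    cases hl : restrict A l <;> cases hr : restrict A r <;> simp [restrict, hl, hr, leafM]

theorem restrict_restrict [DecidableEq α] {A B : Finset α} (hBA : B ⊆ A) (T : RTree α) :
    (restrict A T).bind (restrict B) = restrict B T := by
  induction T with
  | leaf a =>
    by_cases ha : a ∈ A
    · simp [restrict, ha]
    · have hb : a ∉ B := fun hb => ha (hBA hb)
      simp [restrict, ha, hb]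
  | node l r ihl ihr =>
    cases hl : restrict A l with
    | none =>
      rw [hl] at ihl; simp only [Option.bind] at ihl
      cases hr : restrict A r with
      | none =>
        rw [hr] at ihr; simp only [Option.bind] at ihr
        simp [restrict, hl, hr, ← ihl, ← ihr]
      | some r' =>
        rw [hr] at ihr; simp only [Option.bind] at ihr
        simp only [restrict, hl, hr, ← ihl, ← ihr, Option.bind]
        cases restrict B r' <;> rfl
    | some l' =>
      rw [hl] at ihl; simp only [Option.bind] at ihl
      cases hr : restrict A r with
      | none =>
        rw [hr] at ihr; simp only [Option.bind] at ihr
        simp only [restrict, hl, hr, ← ihl, ← ihr, Option.bind]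
        cases restrict B l' <;> rfl
      | some r' =>
        rw [hr] at ihr; simp only [Option.bind] at ihr
        simp only [restrict, hl, hr, ← ihl, ← ihr, Option.bind]

theorem restrict_relabel [DecidableEq α] [DecidableEq β] {f : α → β} (hf : Function.Injective f)
    (A : Finset α) (T : RTree α) :
    restrict (A.image f) (relabel f T) = Option.map (relabel f) (restrict A T) := by
  induction T with
  | leaf a =>
    by_cases h : a ∈ A <;> simp [restrict, relabel, Finset.mem_image, hf.eq_iff, h]
  | node l r ihl ihr =>
    cases hl : restrict A l <;> cases hr : restrict A r <;>
      rw [hl] at ihl <;> rw [hr] at ihr <;>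
      simp [restrict, relabel, hl, hr, ihl, ihr]
theorem isRB_relabel {n : ℕ} (σ : Equiv.Perm (Fin n)) (T : RTree (Fin n)) :
    IsRB (relabel (⇑σ) T) ↔ IsRB T := by
  have huniv : (Finset.univ : Finset (Fin n)).val.map ⇑σ = (Finset.univ : Finset (Fin n)).val := by
    conv_rhs => rw [← Finset.map_univ_equiv σ]
    simp [Finset.map_val]
  unfold IsRB
  rw [leafM_relabel]
  constructor
  · intro h
    apply Multiset.map_injective σ.injective
    rw [h, huniv]
  · intro h
    rw [h, huniv]

def relabelEquiv (σ : α ≃ β) : RTree α ≃ RTree β where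
  toFun := relabel σ
  invFun := relabel σ.symm
  left_inv T := by
    rw [relabel_relabel]
    exact relabel_eq_self fun a _ => σ.symm_apply_apply a
  right_inv T := by
    rw [relabel_relabel]
    exact relabel_eq_self fun a _ => σ.apply_symm_apply a

theorem exists_restrict_eq {n s : ℕ} (hs : 1 ≤ s) {A : Finset (Fin n)} (hA : A.card = s)
    {T : RTree (Fin n)} (hT : IsRB T) :
    ∃ t : RTree (Fin s), IsRB t ∧ restrict A T = some (relabel (⇑(A.orderEmbOfFin hA)) t) := by
  classical
  set e := A.orderEmbOfFin hA with he
  have hconv : ∀ x ∈ A, ∃ i, e i = x := by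
    intro x hx
    have : x ∈ Set.range ⇑e := by rw [he, Finset.range_orderEmbOfFin]; exact hx
    exact this
  set g : Fin n → Fin s := fun x => if hx : x ∈ A then (hconv x hx).choose else ⟨0, hs⟩ with hg
  have heg : ∀ x ∈ A, e (g x) = x := by
    intro x hx
    simp only [hg, dif_pos hx]
    exact (hconv x hx).choose_spec
  have hge : ∀ i, g (e i) = i := by
    intro i
    apply e.injective
    exact heg (e i) (Finset.orderEmbOfFin_mem A hA i)
  have hAval : (leafM T).filter (· ∈ A) = A.val := by
    rw [hT, ← Finset.filter_val, Finset.filter_univ_mem]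
  cases hres : restrict A T with
  | none =>
    exfalso
    have h0 := leafM_restrict A T
    rw [hres, hAval] at h0
    have : A.card = 0 := by rw [Finset.card, ← h0]; rfl
    omega
  | some t' =>
    have hleaf : leafM t' = A.val := by
      have h0 := leafM_restrict A T
      rw [hres, hAval] at h0
      exact h0
    have hAmap : A = Finset.univ.map e.toEmbedding := by
      ext x
      simp only [Finset.mem_map, Finset.mem_univ, true_and, RelEmbedding.coe_toEmbedding]
      constructor
      · intro hx; exact hconv x hx
      · rintro ⟨i, rfl⟩; exact Finset.orderEmbOfFin_mem A hA i
    refine ⟨relabel g t', ?_, ?_⟩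
    · unfold IsRB
      rw [leafM_relabel, hleaf, hAmap, Finset.map_val, Multiset.map_map]
      simp only [Function.comp, RelEmbedding.coe_toEmbedding, hge]
      exact Multiset.map_id' _
    · rw [relabel_relabel]
      congr 1
      exact (relabel_eq_self fun a ha => heg a (by rw [hleaf] at ha; exact ha)).symm
theorem sum_pair_eq {n s : ℕ} (hs : 1 ≤ s) {A : Finset (Fin n)} (hA : A.card = s)
    (RBn : Finset (RTree (Fin n))) (hRBn : ∀ T, T ∈ RBn ↔ IsRB T)
    (RBs : Finset (RTree (Fin s))) (hRBs : ∀ t, t ∈ RBs ↔ IsRB t)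
    (p : RTree (Fin n) → ℝ) :
    ∑ T₁ ∈ RBn, ∑ T₂ ∈ RBn, (if restrict A T₁ = restrict A T₂ then p T₁ * p T₂ else 0)
      = ∑ t ∈ RBs, (∑ T ∈ RBn.filter
          (fun T => restrict A T = some (relabel (⇑(A.orderEmbOfFin hA)) t)), p T) ^ 2 := by
  classical
  set e := A.orderEmbOfFin hA with he
  set k : RTree (Fin n) → RTree (Fin s) := fun T =>
    if h : IsRB T then Classical.choose (exists_restrict_eq hs hA h) else leaf ⟨0, hs⟩ with hk
  have hkspec : ∀ T ∈ RBn, IsRB (k T) ∧ restrict A T = some (relabel (⇑e) (k T)) := by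
    intro T hT
    have h := (hRBn T).1 hT
    simp only [hk, dif_pos h]
    exact ⟨(Classical.choose_spec (exists_restrict_eq hs hA h)).1,
      (Classical.choose_spec (exists_restrict_eq hs hA h)).2⟩
  have hmaps : ∀ T ∈ RBn, k T ∈ RBs := fun T hT => (hRBs _).2 (hkspec T hT).1
  have hiff : ∀ T ∈ RBn, ∀ t, (restrict A T = some (relabel (⇑e) t) ↔ k T = t) := by
    intro T hT t
    constructor
    · intro h
      rw [(hkspec T hT).2] at h
      exact relabel_injective e.injective (Option.some.inj h)
    · rintro rfl
      exact (hkspec T hT).2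
  have hfib : ∀ t ∈ RBs, RBn.filter (fun T => restrict A T = some (relabel (⇑e) t))
      = RBn.filter (fun T => k T = t) := by
    intro t _
    exact Finset.filter_congr fun T hT => hiff T hT t
  calc ∑ T₁ ∈ RBn, ∑ T₂ ∈ RBn, (if restrict A T₁ = restrict A T₂ then p T₁ * p T₂ else 0)
      = ∑ t ∈ RBs, ∑ T₁ ∈ RBn.filter (fun T => k T = t),
          ∑ T₂ ∈ RBn, (if restrict A T₁ = restrict A T₂ then p T₁ * p T₂ else 0) :=
        (Finset.sum_fiberwise_of_maps_to hmaps _).symm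
    _ = ∑ t ∈ RBs, ∑ T₁ ∈ RBn.filter (fun T => k T = t),
          ∑ T₂ ∈ RBn.filter (fun T => k T = t), p T₁ * p T₂ := by
        refine Finset.sum_congr rfl fun t ht => Finset.sum_congr rfl fun T₁ hT₁ => ?_
        rw [Finset.mem_filter] at hT₁
        rw [Finset.sum_filter]
        refine Finset.sum_congr rfl fun T₂ hT₂ => ?_
        congr 1
        have : restrict A T₁ = restrict A T₂ ↔ k T₂ = t := by
          rw [(hkspec T₁ hT₁.1).2, hT₁.2, eq_comm]
          exact hiff T₂ hT₂ t
        simp [this]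
    _ = ∑ t ∈ RBs, (∑ T ∈ RBn.filter (fun T => k T = t), p T) ^ 2 := by
        refine Finset.sum_congr rfl fun t ht => ?_
        rw [sq, Finset.sum_mul_sum]
    _ = ∑ t ∈ RBs, (∑ T ∈ RBn.filter
          (fun T => restrict A T = some (relabel (⇑e) t)), p T) ^ 2 := by
        refine Finset.sum_congr rfl fun t ht => ?_
        rw [hfib t ht]

end RTree


/-- The marginal distribution on trees with `s` leaves induced by a distribution `p` on
trees with `n` leaves (supported on the finite set `RBn`):
`pₛ(t) = ∑_{T ∈ RBn, T|_{{0,…,s−1}} = ι(t)} p(T)`, where `ι` identifies trees on `Fin s`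
with trees on the label subset `{0,…,s−1}` of `Fin n`. -/
noncomputable def marginal {n : ℕ} (RBn : Finset (RTree (Fin n))) (p : RTree (Fin n) → ℝ)
    (s : ℕ) (h : s ≤ n) (t : RTree (Fin s)) : ℝ :=
  ∑ T ∈ RBn.filter (fun T =>
      RTree.restrict ((Finset.univ : Finset (Fin s)).image (Fin.castLE h)) T =
        some (RTree.relabel (Fin.castLE h) t)), p T

open RTree in
theorem sum_filter_eq_marginal {n s : ℕ} (hsn : s ≤ n) {A : Finset (Fin n)} (hA : A.card = s)
    (RBn : Finset (RTree (Fin n))) (hRBn : ∀ T, T ∈ RBn ↔ IsRB T)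
    (p : RTree (Fin n) → ℝ)
    (hexch : ∀ (σ : Equiv.Perm (Fin n)) (T : RTree (Fin n)), IsRB T →
      p (relabel (⇑σ) T) = p T)
    (t : RTree (Fin s)) :
    ∑ T ∈ RBn.filter (fun T => restrict A T = some (relabel (⇑(A.orderEmbOfFin hA)) t)), p T
      = marginal RBn p s hsn t := by
  classical
  set e := A.orderEmbOfFin hA with he
  set f₀ : Fin s → Fin n := Fin.castLE hsn with hf₀
  set S₀ : Finset (Fin n) := Finset.univ.image f₀ with hS₀
  have hf₀inj : Function.Injective f₀ := Fin.castLE_injective hsn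
  -- equivalence between S₀ and Fin s
  have hmem₀ : ∀ i : Fin s, f₀ i ∈ S₀ := fun i => Finset.mem_image_of_mem f₀ (Finset.mem_univ i)
  let ι₀ : Fin s ≃ {x : Fin n // x ∈ S₀} := Equiv.ofBijective (fun i => ⟨f₀ i, hmem₀ i⟩)
    ⟨fun i j h => hf₀inj (Subtype.ext_iff.1 h), by
      rintro ⟨x, hx⟩
      rcases Finset.mem_image.1 hx with ⟨i, _, rfl⟩
      exact ⟨i, rfl⟩⟩
  have hmem₁ : ∀ i : Fin s, e i ∈ A := fun i => Finset.orderEmbOfFin_mem A hA i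
  have hconv : ∀ x ∈ A, ∃ i, e i = x := by
    intro x hx
    have : x ∈ Set.range ⇑e := by rw [he, Finset.range_orderEmbOfFin]; exact hx
    exact this
  let ι₁ : Fin s ≃ {x : Fin n // x ∈ A} := Equiv.ofBijective (fun i => ⟨e i, hmem₁ i⟩)
    ⟨fun i j h => e.injective (Subtype.ext_iff.1 h), by
      rintro ⟨x, hx⟩
      rcases hconv x hx with ⟨i, rfl⟩
      exact ⟨i, rfl⟩⟩
  have hcard : Fintype.card {x : Fin n // x ∉ S₀} = Fintype.card {x : Fin n // x ∉ A} := by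
    have h1 : Fintype.card {x : Fin n // x ∈ S₀} = Fintype.card {x : Fin n // x ∈ A} := by
      rw [Fintype.card_coe, Fintype.card_coe, hA, hS₀,
        Finset.card_image_of_injective _ hf₀inj, Finset.card_univ, Fintype.card_fin]
    rw [Fintype.card_subtype_compl, Fintype.card_subtype_compl, h1]
  let κ : {x : Fin n // x ∉ S₀} ≃ {x : Fin n // x ∉ A} := Fintype.equivOfCardEq hcard
  let σ : Equiv.Perm (Fin n) :=
    (Equiv.sumCompl (· ∈ S₀)).symm.trans
      (((ι₀.symm.trans ι₁).sumCongr κ).trans (Equiv.sumCompl (· ∈ A)))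
  have hσ : ∀ i, σ (f₀ i) = e i := by
    intro i
    have h₀ : f₀ i ∈ S₀ := hmem₀ i
    have hi : ι₀.symm ⟨f₀ i, h₀⟩ = i := by
      rw [Equiv.symm_apply_eq]; rfl
    simp only [σ, Equiv.trans_apply, Equiv.sumCompl_symm_apply_of_pos h₀,
      Equiv.sumCongr_apply, Sum.map_inl, hi]
    rfl
  have hσinv : ∀ i, σ.symm (e i) = f₀ i := by
    intro i
    rw [← hσ i, Equiv.symm_apply_apply]
  have himg : S₀.image ⇑σ = A := by
    ext x
    simp only [Finset.mem_image]
    constructor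
    · rintro ⟨y, hy, rfl⟩
      rcases Finset.mem_image.1 hy with ⟨i, _, rfl⟩
      rw [hσ]; exact hmem₁ i
    · intro hx
      rcases hconv x hx with ⟨i, rfl⟩
      exact ⟨f₀ i, hmem₀ i, hσ i⟩
  have hres : ∀ T, restrict A (relabel (⇑σ) T) = Option.map (relabel ⇑σ) (restrict S₀ T) := by
    intro T
    rw [← himg]
    exact restrict_relabel σ.injective S₀ T
  unfold marginal
  refine (Finset.sum_equiv (relabelEquiv σ) ?_ ?_).symm
  · intro T
    simp only [Finset.mem_filter, relabelEquiv, Equiv.coe_fn_mk]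
    constructor
    · rintro ⟨hT, hrT⟩
      refine ⟨(hRBn _).2 ((isRB_relabel σ T).2 ((hRBn T).1 hT)), ?_⟩
      rw [hres, hrT]
      simp only [Option.map_some, relabel_relabel]
      congr 2
      funext i
      exact hσ i
    · rintro ⟨hT, hrT⟩
      rw [hres] at hrT
      cases hX : restrict S₀ T with
      | none => rw [hX] at hrT; simp at hrT
      | some X =>
        rw [hX] at hrT
        simp only [Option.map_some, Option.some.injEq] at hrT
        have hX2 : X = relabel f₀ t := by
          have h2 := congrArg (relabel ⇑σ.symm) hrT
          rw [relabel_relabel, relabel_relabel] at h2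
          have hXX : relabel (⇑σ.symm ∘ ⇑σ) X = X :=
            relabel_eq_self fun a _ => σ.symm_apply_apply a
          rw [hXX] at h2
          rw [h2]
          congr 1
          funext i
          exact hσinv i
        exact ⟨(hRBn _).2 ((isRB_relabel σ T).1 ((hRBn _).1 hT)), congrArg some hX2⟩
  · intro T hT
    rw [Finset.mem_filter] at hT
    exact (hexch σ T ((hRBn T).1 hT.1)).symm

section
open RTree
theorem prob_mast_ge_le_first_moment {n s : ℕ} (hs : 1 ≤ s) (hsn : s ≤ n)
    (RBn : Finset (RTree (Fin n))) (hRBn : ∀ T, T ∈ RBn ↔ RTree.IsRB T)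
    (RBs : Finset (RTree (Fin s))) (hRBs : ∀ t, t ∈ RBs ↔ RTree.IsRB t)
    (p : RTree (Fin n) → ℝ)
    (hp0 : ∀ T, 0 ≤ p T) (hp1 : ∑ T ∈ RBn, p T = 1)
    (hexch : ∀ (σ : Equiv.Perm (Fin n)) (T : RTree (Fin n)), RTree.IsRB T →
      p (RTree.relabel (⇑σ) T) = p T) :
    ∑ T₁ ∈ RBn, ∑ T₂ ∈ RBn, (if s ≤ RTree.mast T₁ T₂ then p T₁ * p T₂ else 0)
      ≤ (n.choose s : ℝ) * ∑ t ∈ RBs, (marginal RBn p s hsn t) ^ 2 := by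
  classical
  set P := Finset.powersetCard s (Finset.univ : Finset (Fin n)) with hP
  have hnonneg : ∀ (T₁ T₂ : RTree (Fin n)) (A : Finset (Fin n)),
      0 ≤ (if restrict A T₁ = restrict A T₂ then p T₁ * p T₂ else 0) := by
    intro T₁ T₂ A
    split
    · exact mul_nonneg (hp0 _) (hp0 _)
    · exact le_refl _
  have hpoint : ∀ (T₁ T₂ : RTree (Fin n)),
      (if s ≤ mast T₁ T₂ then p T₁ * p T₂ else 0)
        ≤ ∑ A ∈ P, (if restrict A T₁ = restrict A T₂ then p T₁ * p T₂ else 0) := by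
    intro T₁ T₂
    by_cases h : s ≤ mast T₁ T₂
    · rw [if_pos h]
      obtain ⟨B, hB, hBcard⟩ := (Finset.le_sup_iff (by simp only [Nat.bot_eq_zero]; omega : (⊥ : ℕ) < s)).1 h
      rw [Finset.mem_filter] at hB
      obtain ⟨A, hAB, hAcard⟩ := Finset.exists_subset_card_eq hBcard
      have heq : restrict A T₁ = restrict A T₂ := by
        rw [← restrict_restrict hAB T₁, ← restrict_restrict hAB T₂, hB.2]
      have hmem : A ∈ P :=
        Finset.mem_powersetCard.2 ⟨Finset.subset_univ _, hAcard⟩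
      refine le_trans (le_of_eq (if_pos heq).symm)
        (Finset.single_le_sum (f := fun A =>
          (if restrict A T₁ = restrict A T₂ then p T₁ * p T₂ else 0))
          (fun A _ => hnonneg T₁ T₂ A) hmem)
    · rw [if_neg h]
      exact Finset.sum_nonneg fun A _ => hnonneg T₁ T₂ A
  calc ∑ T₁ ∈ RBn, ∑ T₂ ∈ RBn, (if s ≤ mast T₁ T₂ then p T₁ * p T₂ else 0)
      ≤ ∑ T₁ ∈ RBn, ∑ T₂ ∈ RBn, ∑ A ∈ P,
          (if restrict A T₁ = restrict A T₂ then p T₁ * p T₂ else 0) :=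
        Finset.sum_le_sum fun T₁ _ => Finset.sum_le_sum fun T₂ _ => hpoint T₁ T₂
    _ = ∑ A ∈ P, ∑ T₁ ∈ RBn, ∑ T₂ ∈ RBn,
          (if restrict A T₁ = restrict A T₂ then p T₁ * p T₂ else 0) := by
        have h1 : ∀ T₁ : RTree (Fin n), ∑ T₂ ∈ RBn, ∑ A ∈ P,
            (if restrict A T₁ = restrict A T₂ then p T₁ * p T₂ else 0)
            = ∑ A ∈ P, ∑ T₂ ∈ RBn,
              (if restrict A T₁ = restrict A T₂ then p T₁ * p T₂ else 0) :=
          fun T₁ => Finset.sum_comm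
        rw [Finset.sum_congr rfl fun T₁ _ => h1 T₁, Finset.sum_comm]
    _ = ∑ A ∈ P, ∑ t ∈ RBs, (marginal RBn p s hsn t) ^ 2 := by
        refine Finset.sum_congr rfl fun A hA => ?_
        have hAcard := (Finset.mem_powersetCard.1 hA).2
        rw [sum_pair_eq hs hAcard RBn hRBn RBs hRBs p]
        exact Finset.sum_congr rfl fun t _ =>
          congrArg (· ^ 2) (sum_filter_eq_marginal hsn hAcard RBn hRBn p hexch t)
    _ = (n.choose s : ℝ) * ∑ t ∈ RBs, (marginal RBn p s hsn t) ^ 2 := by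
        rw [Finset.sum_const, hP, Finset.card_powersetCard, Finset.card_univ,
          Fintype.card_fin, nsmul_eq_mul]

end
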